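/- For a composition alpha, the ribbon Schur function satisfies r_alpha = (-1)^{l(alpha)} * sum over coarsenings beta of alpha of (-1)^{l(beta)} h_{lambda(beta)}, where the sum is over all compositions beta obtained by adding together adjacent parts of alpha, lambda(beta) is the partition obtained by sorting beta, and h denotes products of complete homogeneous symmetric functions. -/

import Mathlib

open scoped BigOperators

/-- `l` is a partition: weakly decreasing list of positive integers. -/
def IsPartitionList (l : List ℕ) : Prop :=
  l.Pairwise (· ≥ ·) ∧ ∀ x ∈ l, 0 < x

/-- `l` is a composition: list of positive integers. -/
def IsCompositionList (l : List ℕ) : Prop := ∀ x ∈ l, 0 < x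

/-- cell `(i, j)` (row `i` from the top, column `j`, both 0-based) of the skew shape `lam/mu`. -/
def SkewCell (lam mu : List ℕ) (i j : ℕ) : Prop :=
  i < lam.length ∧ mu.getD i 0 ≤ j ∧ j < lam.getD i 0

/-- Semistandard filling of the skew shape `lam/mu` (rows weakly increase left to right,
columns strictly increase top to bottom), with junk value `0` off the shape. -/
def IsSkewSSYT (lam mu : List ℕ) (T : ℕ → ℕ → ℕ) : Prop :=
  (∀ i j, ¬ SkewCell lam mu i j → T i j = 0) ∧
  (∀ i j, SkewCell lam mu i j → SkewCell lam mu i (j + 1) → T i j ≤ T i (j + 1)) ∧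
  (∀ i j, SkewCell lam mu i j → SkewCell lam mu (i + 1) j → T i j < T (i + 1) j)

/-- number of cells of `lam/mu` that `T` fills with the value `v`. -/
def skewContent (lam mu : List ℕ) (T : ℕ → ℕ → ℕ) (v : ℕ) : ℕ :=
  ∑ i ∈ Finset.range lam.length,
    ((Finset.Ico (mu.getD i 0) (lam.getD i 0)).filter fun j => T i j = v).card

/-- The skew Schur function of `lam/mu` as a formal power series in variables `x_0, x_1, …`:
the coefficient of a monomial `m` is the number of semistandard fillings of content `m`. -/
noncomputable def skewSchur (lam mu : List ℕ) : MvPowerSeries ℕ ℤ :=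
  fun m => (Set.ncard {T : ℕ → ℕ → ℕ |
    IsSkewSSYT lam mu T ∧ ∀ v, skewContent lam mu T v = m v} : ℤ)

/-- The Schur function of a partition. -/
noncomputable def schurFn (lam : List ℕ) : MvPowerSeries ℕ ℤ := skewSchur lam []

/-- Outer shape of the ribbon whose row lengths read from top to bottom are `α`. -/
def ribbonOuter (α : List ℕ) : List ℕ :=
  List.ofFn fun i : Fin α.length => (α.drop (i : ℕ)).sum - (α.length - 1 - (i : ℕ))

/-- Inner shape of the ribbon whose row lengths read from top to bottom are `α`. -/
def ribbonInner (α : List ℕ) : List ℕ :=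
  List.ofFn fun i : Fin α.length =>
    (α.drop (i : ℕ)).sum - (α.length - 1 - (i : ℕ)) - α.getD (i : ℕ) 0

/-- The ribbon Schur function of the composition `α`. -/
noncomputable def ribbonSchur (α : List ℕ) : MvPowerSeries ℕ ℤ :=
  skewSchur (ribbonOuter α) (ribbonInner α)

/-- A symmetric function is Schur-positive if it is a finite nonnegative integer
combination of Schur functions of partitions. -/
def SchurPos (f : MvPowerSeries ℕ ℤ) : Prop :=
  ∃ c : List ℕ →₀ ℕ, (∀ μ ∈ c.support, IsPartitionList μ) ∧
    f = c.sum fun μ n => (n : ℤ) • schurFn μ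

/-- Strict Schur-positivity order: `f >_s g`. -/
def SchurGT (f g : MvPowerSeries ℕ ℤ) : Prop := SchurPos (f - g) ∧ f ≠ g

/-- near-concatenation of compositions. -/
def nearConcat (a b : List ℕ) : List ℕ :=
  a.dropLast ++ (a.getLastD 0 + b.headI) :: b.tail

/-- near-concatenation of `k` copies of `b`. -/
def odotPow (b : List ℕ) : ℕ → List ℕ
  | 0 => []
  | k + 1 => nearConcat (odotPow b k) b

/-- composition of compositions `a ∘ b`. -/
def compComp (a b : List ℕ) : List ℕ := (a.map (odotPow b)).flatten

/-- `M_i` (with `i` 1-based): decrement the first part by one, increment the `i`-th part by one. -/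
def Mi (α : List ℕ) (i : ℕ) : List ℕ :=
  (α.set (i - 1) (α.getD (i - 1) 0 + 1)).set 0 (α.headI - 1)

/-- the complete homogeneous symmetric function `h_N`: the sum of all monomials of degree `N`. -/
noncomputable def hN (N : ℕ) : MvPowerSeries ℕ ℤ :=
  fun m => if (∑ v ∈ m.support, m v) = N then 1 else 0

/-- `h_λ = h_{λ_1} ⋯ h_{λ_k}`. -/
noncomputable def hProd (l : List ℕ) : MvPowerSeries ℕ ℤ := (l.map hN).prod

/-- lexicographic order on partitions (padding with zeros). -/
def LexLt (μ ν : List ℕ) : Prop :=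
  ∃ k, (∀ i < k, μ.getD i 0 = ν.getD i 0) ∧ μ.getD k 0 < ν.getD k 0

/-- entrywise union (max) of two partitions. -/
def pUnion (a b : List ℕ) : List ℕ :=
  List.ofFn fun i : Fin (max a.length b.length) => max (a.getD (i : ℕ) 0) (b.getD (i : ℕ) 0)

/-- entrywise intersection (min) of two partitions. -/
def pInter (a b : List ℕ) : List ℕ :=
  List.ofFn fun i : Fin (min a.length b.length) => min (a.getD (i : ℕ) 0) (b.getD (i : ℕ) 0)

/-- the number of end rows (first and last part) of `γ` equal to `a`. -/
def shortEnds (a : ℕ) (γ : List ℕ) : ℕ :=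
  (if γ.headI = a then 1 else 0) + (if γ.getLastD 0 = a then 1 else 0)

/-- cells of the ribbon whose row lengths read from the bottom are `β`;
cells are pairs `(row, column)`, rows counted from the bottom starting at `0`. -/
def ribbonCells (β : List ℕ) : Finset (ℕ × ℕ) :=
  (Finset.range β.length).biUnion fun i =>
    (Finset.Ico ((β.take i).sum - i) ((β.take i).sum - i + β.getD i 0)).image fun j => (i, j)

/-- The box diagonal diagram `P_{R,S}`: cells `(x, y)` (column `x`, row `y` from the bottom,
both 1-based, with the top-right corner of the cell at the point `(x, y)`) of the `R × S` grid
whose interior or top-left corner point is met by the line `y = (R/S) x`. -/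
def boxDiagonal (R S : ℕ) : Finset (ℕ × ℕ) :=
  (Finset.Icc 1 S ×ˢ Finset.Icc 1 R).filter fun c =>
    (R : ℚ) * ((c.1 : ℚ) - 1) ≤ (S : ℚ) * (c.2 : ℚ) ∧
    (S : ℚ) * ((c.2 : ℚ) - 1) < (R : ℚ) * (c.1 : ℚ)

/-- length of row `y` (from the bottom, 1-based) of `P_{R,S}`. -/
def bdRowLen (R S y : ℕ) : ℕ := ((boxDiagonal R S).filter fun c => c.2 = y).card

/-- length of column `x` (1-based) of `P_{R,S}`. -/
def bdColLen (R S x : ℕ) : ℕ := ((boxDiagonal R S).filter fun c => c.1 = x).card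

/-- the set of columns occupied by row `y` of `P_{R,S}`. -/
def bdRowCols (R S y : ℕ) : Finset ℕ :=
  ((boxDiagonal R S).filter fun c => c.2 = y).image Prod.fst

/-- generalized binomial coefficient `C(z, k) = z(z-1)⋯(z-k+1)/k!` for arbitrary integer `z`. -/
def gbinom (z : ℤ) (k : ℕ) : ℚ :=
  (∏ i ∈ Finset.range k, ((z : ℚ) - (i : ℚ))) / (Nat.factorial k : ℚ)

/-- `f(p) = ∑_{η_1+⋯+η_n = k} ∏_i C(p_i - η_i, η_i)`. -/
def jensenSum (n k : ℕ) (p : Fin n → ℤ) : ℚ :=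
  ∑ η ∈ Finset.Nat.antidiagonalTuple n k, ∏ i, gbinom (p i - (η i : ℤ)) (η i)

namespace RSH

/-- right end (exclusive) of row `i` of the ribbon of `δ`. -/
def Rr (δ : List ℕ) (i : ℕ) : ℕ := (δ.drop i).sum - (δ.length - 1 - i)

/-- left end (inclusive) of row `i` of the ribbon of `δ`. -/
def Ll (δ : List ℕ) (i : ℕ) : ℕ := Rr δ i - δ.getD i 0

lemma getD_ribbonOuter (δ : List ℕ) {i : ℕ} (h : i < δ.length) :
    (ribbonOuter δ).getD i 0 = Rr δ i := by
  rw [ribbonOuter, List.getD_eq_getElem?_getD, List.getElem?_ofFn]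
  simp [h, Rr]

lemma getD_ribbonInner (δ : List ℕ) {i : ℕ} (h : i < δ.length) :
    (ribbonInner δ).getD i 0 = Ll δ i := by
  rw [ribbonInner, List.getD_eq_getElem?_getD, List.getElem?_ofFn]
  simp [h, Ll, Rr]

lemma cell_iff (δ : List ℕ) (i j : ℕ) :
    SkewCell (ribbonOuter δ) (ribbonInner δ) i j ↔
      i < δ.length ∧ Ll δ i ≤ j ∧ j < Rr δ i := by
  unfold SkewCell
  constructor
  · rintro ⟨h1, h2, h3⟩
    have hl : i < δ.length := by simpa [ribbonOuter] using h1
    rw [getD_ribbonInner δ hl] at h2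
    rw [getD_ribbonOuter δ hl] at h3
    exact ⟨hl, h2, h3⟩
  · rintro ⟨h1, h2, h3⟩
    rw [← getD_ribbonInner δ h1] at h2
    rw [← getD_ribbonOuter δ h1] at h3
    exact ⟨by simpa [ribbonOuter] using h1, h2, h3⟩

lemma length_le_sum {l : List ℕ} (hl : ∀ x ∈ l, 0 < x) : l.length ≤ l.sum := by
  induction l with
  | nil => simp
  | cons a t ih =>
    simp only [List.length_cons, List.sum_cons]
    have := hl a (by simp)
    have := ih (fun x hx => hl x (by simp [hx]))
    omega

lemma drop_sum_succ {δ : List ℕ} {i : ℕ} (h : i < δ.length) :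
    (δ.drop i).sum = δ.getD i 0 + (δ.drop (i + 1)).sum := by
  rw [List.getD_eq_getElem _ _ h, List.drop_eq_getElem_cons h, List.sum_cons]

lemma getD_pos {δ : List ℕ} (hδ : IsCompositionList δ) {i : ℕ} (h : i < δ.length) :
    0 < δ.getD i 0 := by
  rw [List.getD_eq_getElem _ _ h]
  exact hδ _ (List.getElem_mem h)

lemma drop_sum_ge {δ : List ℕ} (hδ : IsCompositionList δ) (i : ℕ) :
    δ.length - i ≤ (δ.drop i).sum := by
  have h1 : (δ.drop i).length ≤ (δ.drop i).sum :=
    length_le_sum (fun x hx => hδ x (List.mem_of_mem_drop hx))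
  simpa using h1

lemma Ll_add_getD {δ : List ℕ} (hδ : IsCompositionList δ) {i : ℕ} (h : i < δ.length) :
    Ll δ i + δ.getD i 0 = Rr δ i := by
  have h1 := drop_sum_succ h
  have h2 := drop_sum_ge hδ (i + 1)
  have h3 := getD_pos hδ h
  unfold Ll Rr
  omega

lemma Rr_succ {δ : List ℕ} (hδ : IsCompositionList δ) {i : ℕ} (h : i + 1 < δ.length) :
    Rr δ (i + 1) = Ll δ i + 1 := by
  have h1 := drop_sum_succ (by omega : i < δ.length)
  have h2 := drop_sum_ge hδ (i + 1)
  have h3 := getD_pos hδ (by omega : i < δ.length)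
  unfold Ll Rr
  omega

lemma Rr_le_sum (δ : List ℕ) (i : ℕ) : Rr δ i ≤ δ.sum := by
  have : (δ.drop i).sum ≤ δ.sum := by
    conv_rhs => rw [← List.take_append_drop i δ]
    rw [List.sum_append]; omega
  unfold Rr; omega

/-- two cells in the same column of consecutive rows must be at the overlap column. -/
lemma overlap_col {δ : List ℕ} (hδ : IsCompositionList δ) {i j : ℕ}
    (h1 : i < δ.length) (h2 : Ll δ i ≤ j) (h3 : j < Rr δ i)
    (h4 : i + 1 < δ.length) (h5 : Ll δ (i+1) ≤ j) (h6 : j < Rr δ (i+1)) :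
    j = Ll δ i := by
  have := Rr_succ hδ h4
  omega

end RSH
namespace RSH

lemma card_filter_range_getD (l : List ℕ) (v : ℕ) :
    ((Finset.range l.length).filter fun k => l.getD k 0 = v).card = l.count v := by
  induction l with
  | nil => simp
  | cons x xs ih =>
    rw [Finset.card_filter, List.length_cons, Finset.sum_range_succ']
    simp only [List.getD_cons_succ, List.getD_cons_zero]
    rw [← Finset.card_filter, ih, List.count_cons]
    by_cases hx : x = v
    · simp [hx]
    · simp [hx, Ne.symm hx]

lemma rowContent_shift (t : ℕ → ℕ) (L a v : ℕ) :
    ((Finset.Ico L (L + a)).filter fun j => t j = v).card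
      = ((Finset.range a).filter fun k => t (L + k) = v).card := by
  apply Finset.card_bij' (fun j _ => j - L) (fun k _ => L + k)
  · intro j hj
    simp only [Finset.mem_filter, Finset.mem_Ico] at hj
    simp only [Finset.mem_filter, Finset.mem_range]
    constructor
    · omega
    · have : L + (j - L) = j := by omega
      rw [this]; exact hj.2
  · intro k hk
    simp only [Finset.mem_filter, Finset.mem_range] at hk
    simp only [Finset.mem_filter, Finset.mem_Ico]
    exact ⟨⟨by omega, by omega⟩, hk.2⟩
  · intro j hj
    simp only [Finset.mem_filter, Finset.mem_Ico] at hj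
    omega
  · intro k _
    omega

/-- the canonical sorted list of values of the monomial `m`. -/
noncomputable def sortedRowList (m : ℕ →₀ ℕ) : List ℕ :=
  (Finsupp.toMultiset m).sort (· ≤ ·)

lemma sortedRowList_sorted (m : ℕ →₀ ℕ) : (sortedRowList m).Pairwise (· ≤ ·) :=
  Multiset.pairwise_sort _ _

lemma sortedRowList_count (m : ℕ →₀ ℕ) (v : ℕ) : (sortedRowList m).count v = m v := by
  have h : ((sortedRowList m : List ℕ) : Multiset ℕ) = Finsupp.toMultiset m :=
    Multiset.sort_eq _ _
  rw [← Finsupp.count_toMultiset m v, ← h, Multiset.coe_count]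

lemma sortedRowList_length (m : ℕ →₀ ℕ) :
    (sortedRowList m).length = ∑ v ∈ m.support, m v := by
  have : ((sortedRowList m : List ℕ) : Multiset ℕ) = Finsupp.toMultiset m :=
    Multiset.sort_eq _ _
  have h2 := congrArg Multiset.card this
  simp only [Multiset.coe_card] at h2
  rw [h2, Finsupp.card_toMultiset]
  rfl

/-- the list of row values of `t` on `[L, L+a)`. -/
def rowList (t : ℕ → ℕ) (L a : ℕ) : List ℕ := List.ofFn fun k : Fin a => t (L + k)

lemma rowList_getD (t : ℕ → ℕ) (L a : ℕ) {k : ℕ} (hk : k < a) :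
    (rowList t L a).getD k 0 = t (L + k) := by
  rw [rowList, List.getD_eq_getElem _ _ (by simpa using hk)]
  simp

lemma rowList_count (t : ℕ → ℕ) (L a v : ℕ) :
    (rowList t L a).count v = ((Finset.Ico L (L + a)).filter fun j => t j = v).card := by
  rw [rowContent_shift, ← card_filter_range_getD]
  have hl : (rowList t L a).length = a := by simp [rowList]
  rw [hl]
  congr 1
  apply Finset.filter_congr
  intro k hk
  simp only [Finset.mem_range] at hk
  rw [rowList_getD t L a hk]

lemma rowList_sorted {t : ℕ → ℕ} {L a : ℕ}
    (hstep : ∀ j, L ≤ j → j + 1 < L + a → t j ≤ t (j + 1)) :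
    (rowList t L a).Pairwise (· ≤ ·) := by
  have mono : ∀ d k, k + d < a → t (L + k) ≤ t (L + k + d) := by
    intro d
    induction d with
    | zero => intro k _; simp
    | succ d ih =>
      intro k hk
      have h1 : t (L + k) ≤ t (L + k + d) := ih k (by omega)
      have h2 : t (L + k + d) ≤ t (L + k + d + 1) :=
        hstep (L + k + d) (by omega) (by omega)
      rw [show L + k + (d + 1) = L + k + d + 1 by omega]
      omega
  rw [List.pairwise_iff_get]
  intro i j hij
  have hl : (rowList t L a).length = a := by simp [rowList]
  show (rowList t L a)[(i : ℕ)] ≤ (rowList t L a)[(j : ℕ)]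
  simp only [rowList, List.getElem_ofFn]
  have hi : (i : ℕ) < a := by have := i.2; omega
  have hj : (j : ℕ) < a := by have := j.2; omega
  have := mono ((j : ℕ) - (i : ℕ)) (i : ℕ) (by omega)
  have heq : L + (i : ℕ) + ((j : ℕ) - (i : ℕ)) = L + (j : ℕ) := by
    have : (i : ℕ) < (j : ℕ) := hij
    omega
  rw [heq] at this
  exact this

lemma row_total {t : ℕ → ℕ} {L a : ℕ} {m1 : ℕ →₀ ℕ}
    (hc : ∀ v, ((Finset.Ico L (L + a)).filter fun j => t j = v).card = m1 v) :
    (∑ v ∈ m1.support, m1 v) = a := by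
  have hmem : ∀ j ∈ Finset.Ico L (L + a), t j ∈ m1.support := by
    intro j hj
    rw [Finsupp.mem_support_iff, ← hc (t j)]
    exact Finset.card_ne_zero_of_mem (Finset.mem_filter.mpr ⟨hj, rfl⟩)
  calc (∑ v ∈ m1.support, m1 v)
      = ∑ v ∈ m1.support, ((Finset.Ico L (L + a)).filter fun j => t j = v).card :=
        Finset.sum_congr rfl (fun v _ => (hc v).symm)
    _ = (Finset.Ico L (L + a)).card := (Finset.card_eq_sum_card_fiberwise hmem).symm
    _ = a := by rw [Nat.card_Ico]; omega

lemma row_exists_unique (L a : ℕ) (m : ℕ →₀ ℕ) (hm : (∑ v ∈ m.support, m v) = a) :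
    ∃! t : ℕ → ℕ,
      (∀ j, ¬ (L ≤ j ∧ j < L + a) → t j = 0) ∧
      (∀ j, L ≤ j → j + 1 < L + a → t j ≤ t (j + 1)) ∧
      (∀ v, ((Finset.Ico L (L + a)).filter fun j => t j = v).card = m v) := by
  classical
  set l := sortedRowList m with hl
  have hlen : l.length = a := by rw [hl, sortedRowList_length, hm]
  refine ⟨fun j => if L ≤ j ∧ j < L + a then l.getD (j - L) 0 else 0, ⟨?_, ?_, ?_⟩, ?_⟩
  · intro j hj; simp [hj]
  · intro j h1 h2
    have e1 : (L ≤ j ∧ j < L + a) := ⟨h1, by omega⟩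
    have e2 : (L ≤ j + 1 ∧ j + 1 < L + a) := ⟨by omega, h2⟩
    beta_reduce
    rw [if_pos e1, if_pos e2]
    have hi1 : j - L < l.length := by omega
    have hi2 : j + 1 - L < l.length := by omega
    rw [List.getD_eq_getElem _ _ hi1, List.getD_eq_getElem _ _ hi2]
    have hs := sortedRowList_sorted m
    rw [← hl] at hs
    have := List.Pairwise.rel_get_of_lt hs (a := ⟨j - L, hi1⟩) (b := ⟨j + 1 - L, hi2⟩)
      (by rw [Fin.lt_def]; simp only []; omega)
    simpa using this
  · intro v
    rw [rowContent_shift, ← sortedRowList_count m v, ← hl, ← card_filter_range_getD, hlen]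
    congr 1
    apply Finset.filter_congr
    intro k hk
    simp only [Finset.mem_range] at hk
    have hh : (L ≤ L + k ∧ L + k < L + a) := ⟨by omega, by omega⟩
    beta_reduce
    rw [if_pos hh]
    simp
  · intro t' ⟨hoff, hstep, hcont⟩
    have hsl : (rowList t' L a).Pairwise (· ≤ ·) := rowList_sorted hstep
    have hceq : rowList t' L a = l := by
      apply List.Perm.eq_of_pairwise' hsl (by rw [hl]; exact sortedRowList_sorted m)
      rw [List.perm_iff_count]
      intro v
      rw [rowList_count, hcont v, hl, sortedRowList_count]
    funext j
    by_cases hj : L ≤ j ∧ j < L + a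
    · rw [if_pos hj]
      have : t' j = (rowList t' L a).getD (j - L) 0 := by
        rw [rowList_getD t' L a (by omega)]
        congr 1; omega
      rw [this, hceq]
    · rw [if_neg hj, hoff j hj]

end RSH
namespace RSH

/-- the set of SSYT of shape `lam/mu` with content `m`. -/
def SSet (lam mu : List ℕ) (m : ℕ →₀ ℕ) : Set (ℕ → ℕ → ℕ) :=
  {T | IsSkewSSYT lam mu T ∧ ∀ v, skewContent lam mu T v = m v}

lemma skewSchur_apply (lam mu : List ℕ) (m : ℕ →₀ ℕ) :
    skewSchur lam mu m = ((SSet lam mu m).ncard : ℤ) := rfl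

lemma mem_le_sum {l : List ℕ} {x : ℕ} (hx : x ∈ l) : x ≤ l.sum := by
  induction l with
  | nil => simp at hx
  | cons a t ih =>
    rcases List.mem_cons.mp hx with h | h
    · simp [h]
    · have := ih h; simp; omega

lemma val_mem_support {lam mu : List ℕ} {m : ℕ →₀ ℕ} {U : ℕ → ℕ → ℕ}
    (hcont : ∀ v, skewContent lam mu U v = m v) {i j : ℕ}
    (hcell : SkewCell lam mu i j) : U i j ∈ m.support := by
  rw [Finsupp.mem_support_iff, ← hcont (U i j)]
  unfold skewContent
  intro h
  rw [Finset.sum_eq_zero_iff] at h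
  have hi : i ∈ Finset.range lam.length := Finset.mem_range.mpr hcell.1
  have h0 := h i hi
  have hpos : 0 < ((Finset.Ico (mu.getD i 0) (lam.getD i 0)).filter
      fun j' => U i j' = U i j).card :=
    Finset.card_pos.mpr ⟨j, Finset.mem_filter.mpr
      ⟨Finset.mem_Ico.mpr ⟨hcell.2.1, hcell.2.2⟩, rfl⟩⟩
  omega

lemma finite_fillings (lam mu : List ℕ) (m : ℕ →₀ ℕ) (S : Set (ℕ → ℕ → ℕ))
    (hker : ∀ U ∈ S, ∀ i j, ¬ SkewCell lam mu i j → U i j = 0)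
    (hcont : ∀ U ∈ S, ∀ v, skewContent lam mu U v = m v) : S.Finite := by
  classical
  set B := m.support.sup id with hB
  set CF : Finset (ℕ × ℕ) := (Finset.range lam.length) ×ˢ (Finset.range lam.sum) with hCF
  have hbound : ∀ U ∈ S, ∀ i j, U i j ≤ B := by
    intro U hU i j
    by_cases hc : SkewCell lam mu i j
    · have := val_mem_support (hcont U hU) hc
      exact Finset.le_sup (f := id) this
    · rw [hker U hU i j hc]; exact Nat.zero_le _
  have hcf : ∀ i j, SkewCell lam mu i j → (i, j) ∈ CF := by
    intro i j hc
    rw [hCF, Finset.mem_product]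
    refine ⟨Finset.mem_range.mpr hc.1, Finset.mem_range.mpr ?_⟩
    have h1 : j < lam.getD i 0 := hc.2.2
    have h2 : lam.getD i 0 ≤ lam.sum := by
      rw [List.getD_eq_getElem _ _ hc.1]
      exact mem_le_sum (List.getElem_mem hc.1)
    omega
  rw [← Set.finite_coe_iff]
  have hinj : Function.Injective
      (fun (U : S) (c : CF) => (⟨min (U.val c.val.1 c.val.2) B, by omega⟩ : Fin (B + 1))) := by
    intro U U' h
    ext i j
    by_cases hc : SkewCell lam mu i j
    · have hmem := hcf i j hc
      have := congrFun h ⟨(i, j), hmem⟩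
      have hv : (⟨min (U.val i j) B, _⟩ : Fin (B+1)) = ⟨min (U'.val i j) B, _⟩ := this
      have hv2 : min (U.val i j) B = min (U'.val i j) B := congrArg Fin.val hv
      have b1 := hbound U U.2 i j
      have b2 := hbound U' U'.2 i j
      omega
    · rw [hker U U.2 i j hc, hker U' U'.2 i j hc]
  exact Finite.of_injective _ hinj

lemma ncard_biUnion {ι : Type} [DecidableEq ι] (s : Finset ι) (f : ι → Set (ℕ → ℕ → ℕ))
    (hfin : ∀ i ∈ s, (f i).Finite)
    (hdisj : ∀ i ∈ s, ∀ j ∈ s, i ≠ j → Disjoint (f i) (f j)) :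
    (⋃ i ∈ s, f i).ncard = ∑ i ∈ s, (f i).ncard := by
  induction s using Finset.induction with
  | empty => simp
  | @insert a s ha ih =>
    rw [Finset.sum_insert ha, Finset.set_biUnion_insert _ _ _]
    have hfinU : (⋃ i ∈ s, f i).Finite :=
      Set.Finite.biUnion s.finite_toSet (fun i hi => hfin i (Finset.mem_insert_of_mem hi))
    have hd : Disjoint (f a) (⋃ i ∈ s, f i) := by
      rw [Set.disjoint_iUnion_right]
      intro i
      rw [Set.disjoint_iUnion_right]
      intro hi
      exact hdisj a (Finset.mem_insert_self a s) i (Finset.mem_insert_of_mem hi)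
        (fun he => ha (he ▸ hi))
    rw [Set.ncard_union_eq hd (hfin a (Finset.mem_insert_self a s)) hfinU]
    rw [ih (fun i hi => hfin i (Finset.mem_insert_of_mem hi))
      (fun i hi j hj hij => hdisj i (Finset.mem_insert_of_mem hi) j
        (Finset.mem_insert_of_mem hj) hij)]

lemma Rr_cons (a : ℕ) (γ : List ℕ) (k : ℕ) : Rr (a :: γ) (k + 1) = Rr γ k := by
  unfold Rr
  simp only [List.drop_succ_cons, List.length_cons]
  congr 1
  omega

lemma Ll_cons (a : ℕ) (γ : List ℕ) (k : ℕ) : Ll (a :: γ) (k + 1) = Ll γ k := by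
  unfold Ll
  rw [Rr_cons]
  rfl

lemma cell_cons_iff (a : ℕ) (γ : List ℕ) (i j : ℕ) :
    SkewCell (ribbonOuter (a :: γ)) (ribbonInner (a :: γ)) (i + 1) j ↔
      SkewCell (ribbonOuter γ) (ribbonInner γ) i j := by
  rw [cell_iff, cell_iff, Rr_cons, Ll_cons]
  simp only [List.length_cons]
  omega

lemma skewContent_cons (a : ℕ) (γ : List ℕ) (U : ℕ → ℕ → ℕ) (v : ℕ) :
    skewContent (ribbonOuter (a :: γ)) (ribbonInner (a :: γ)) U v
      = ((Finset.Ico (Ll (a :: γ) 0) (Rr (a :: γ) 0)).filter fun j => U 0 j = v).card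
        + skewContent (ribbonOuter γ) (ribbonInner γ) (fun i j => U (i + 1) j) v := by
  unfold skewContent
  rw [show (ribbonOuter (a :: γ)).length = γ.length + 1 by simp [ribbonOuter]]
  rw [show (ribbonOuter γ).length = γ.length by simp [ribbonOuter]]
  rw [Finset.sum_range_succ', Nat.add_comm]
  congr 1
  · rw [getD_ribbonOuter _ (by simp), getD_ribbonInner _ (by simp)]
  · apply Finset.sum_congr rfl
    intro k hk
    rw [Finset.mem_range] at hk
    rw [getD_ribbonOuter _ (by simp; omega), getD_ribbonInner _ (by simp; omega),
        getD_ribbonOuter _ (by simp [hk]), getD_ribbonInner _ (by simp [hk]),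
        Rr_cons, Ll_cons]

lemma card_filter_Ico_shift (t : ℕ → ℕ) (L R v : ℕ) (hLR : L ≤ R) :
    ((Finset.Ico (L + 1) (R + 1)).filter fun j => t (j - 1) = v).card
      = ((Finset.Ico L R).filter fun j => t j = v).card := by
  have h1 : ((Finset.Ico (L + 1) (L + 1 + (R - L))).filter fun j => t (j - 1) = v).card
      = ((Finset.range (R - L)).filter fun k => t (L + 1 + k - 1) = v).card :=
    rowContent_shift (fun j => t (j - 1)) (L + 1) (R - L) v
  have h2 : ((Finset.Ico L (L + (R - L))).filter fun j => t j = v).card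
      = ((Finset.range (R - L)).filter fun k => t (L + k) = v).card :=
    rowContent_shift t L (R - L) v
  rw [show L + 1 + (R - L) = R + 1 by omega] at h1
  rw [show L + (R - L) = R by omega] at h2
  rw [h1, h2]
  congr 1
  apply Finset.filter_congr
  intro k _
  rw [show L + 1 + k - 1 = L + k by omega]

end RSH
namespace RSH

section coords
variable (a g : ℕ) (gs : List ℕ)

lemma F1 (ha : 0 < a) (hg : 0 < g) (hgs : gs.length ≤ gs.sum) :
    Rr (a :: g :: gs) 0 = Ll (a :: g :: gs) 0 + a := by
  simp only [Rr, Ll, List.length_cons, List.sum_cons, List.drop_succ_cons, List.drop_zero,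
    List.getD_cons_zero, List.getD_cons_succ]
  omega

lemma F2 (ha : 0 < a) (hg : 0 < g) (hgs : gs.length ≤ gs.sum) :
    Rr (a :: g :: gs) 1 = Ll (a :: g :: gs) 0 + 1 := by
  simp only [Rr, Ll, List.length_cons, List.sum_cons, List.drop_succ_cons, List.drop_zero,
    List.getD_cons_zero, List.getD_cons_succ]
  omega

lemma F3 (ha : 0 < a) (hg : 0 < g) (hgs : gs.length ≤ gs.sum) :
    Ll (a :: g :: gs) 1 + g = Ll (a :: g :: gs) 0 + 1 := by
  simp only [Rr, Ll, List.length_cons, List.sum_cons, List.drop_succ_cons, List.drop_zero,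
    List.getD_cons_zero, List.getD_cons_succ]
  omega

lemma F4 (ha : 0 < a) (hg : 0 < g) (hgs : gs.length ≤ gs.sum) :
    Rr ((a + g) :: gs) 0 = Rr (a :: g :: gs) 0 + 1 := by
  simp only [Rr, Ll, List.length_cons, List.sum_cons, List.drop_succ_cons, List.drop_zero,
    List.getD_cons_zero, List.getD_cons_succ]
  omega

lemma F5 (ha : 0 < a) (hg : 0 < g) (hgs : gs.length ≤ gs.sum) :
    Ll ((a + g) :: gs) 0 = Ll (a :: g :: gs) 1 := by
  simp only [Rr, Ll, List.length_cons, List.sum_cons, List.drop_succ_cons, List.drop_zero,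
    List.getD_cons_zero, List.getD_cons_succ]
  omega

lemma F6R (k : ℕ) : Rr ((a + g) :: gs) (k + 1) = Rr (a :: g :: gs) (k + 2) := by
  rw [Rr_cons, show k + 2 = (k + 1) + 1 by omega, Rr_cons, Rr_cons]

lemma F6L (k : ℕ) : Ll ((a + g) :: gs) (k + 1) = Ll (a :: g :: gs) (k + 2) := by
  rw [Ll_cons, show k + 2 = (k + 1) + 1 by omega, Ll_cons, Ll_cons]

end coords

/-- Fillings of the ribbon of `δ` which satisfy all SSYT conditions except possibly
column-strictness at the corner between rows `0` and `1`, with content `m`. -/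
def DSet (δ : List ℕ) (m : ℕ →₀ ℕ) : Set (ℕ → ℕ → ℕ) :=
  {U | (∀ i j, ¬ SkewCell (ribbonOuter δ) (ribbonInner δ) i j → U i j = 0) ∧
       (∀ i j, SkewCell (ribbonOuter δ) (ribbonInner δ) i j →
          SkewCell (ribbonOuter δ) (ribbonInner δ) i (j + 1) → U i j ≤ U i (j + 1)) ∧
       (∀ i j, SkewCell (ribbonOuter δ) (ribbonInner δ) (i + 1) j →
          SkewCell (ribbonOuter δ) (ribbonInner δ) (i + 2) j → U (i + 1) j < U (i + 2) j) ∧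
       (∀ v, skewContent (ribbonOuter δ) (ribbonInner δ) U v = m v)}

/-- splitting a filling of the ribbon of `(a+g) :: gs` into one of `a :: g :: gs`. -/
def splitMap (L0 R0 L1 : ℕ) (V : ℕ → ℕ → ℕ) : ℕ → ℕ → ℕ :=
  fun i j =>
    if i = 0 then (if L0 ≤ j ∧ j < R0 then V 0 (j + 1) else 0)
    else if i = 1 then (if L1 ≤ j ∧ j ≤ L0 then V 0 j else 0)
    else V (i - 1) j

/-- merging rows `0` and `1` of a filling of the ribbon of `a :: g :: gs`. -/
def mergeMap (L0 : ℕ) (U : ℕ → ℕ → ℕ) : ℕ → ℕ → ℕ :=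
  fun i j => if i = 0 then (if j ≤ L0 then U 1 j else U 0 (j - 1)) else U (i + 1) j

end RSH

namespace RSH
section evals
variable (L0 R0 L1 : ℕ) (V U : ℕ → ℕ → ℕ) (j k : ℕ)

lemma splitMap_zero : splitMap L0 R0 L1 V 0 j = if L0 ≤ j ∧ j < R0 then V 0 (j + 1) else 0 := rfl
lemma splitMap_one : splitMap L0 R0 L1 V 1 j = if L1 ≤ j ∧ j ≤ L0 then V 0 j else 0 := rfl
lemma splitMap_ge2 : splitMap L0 R0 L1 V (k + 2) j = V (k + 1) j := rfl
lemma mergeMap_zero : mergeMap L0 U 0 j = if j ≤ L0 then U 1 j else U 0 (j - 1) := rfl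
lemma mergeMap_succ : mergeMap L0 U (k + 1) j = U (k + 2) j := rfl

end evals
end RSH

namespace RSH
/-- prepend a top row to a filling. -/
def liftRow (t0 : ℕ → ℕ) (T : ℕ → ℕ → ℕ) : ℕ → ℕ → ℕ :=
  fun i j => if i = 0 then t0 j else T (i - 1) j

lemma liftRow_zero (t0 : ℕ → ℕ) (T : ℕ → ℕ → ℕ) (j : ℕ) : liftRow t0 T 0 j = t0 j := rfl
lemma liftRow_succ (t0 : ℕ → ℕ) (T : ℕ → ℕ → ℕ) (k j : ℕ) :
    liftRow t0 T (k + 1) j = T k j := rfl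
end RSH
namespace RSH

lemma split_content (a g : ℕ) (gs : List ℕ) (ha : 0 < a) (hγ : IsCompositionList (g :: gs))
    (V : ℕ → ℕ → ℕ) (v : ℕ) :
    skewContent (ribbonOuter (a :: g :: gs)) (ribbonInner (a :: g :: gs))
        (splitMap (Ll (a :: g :: gs) 0) (Rr (a :: g :: gs) 0) (Ll (a :: g :: gs) 1) V) v
      = skewContent (ribbonOuter ((a + g) :: gs)) (ribbonInner ((a + g) :: gs)) V v := by
  have hg : 0 < g := hγ g (by simp)
  have hgs : gs.length ≤ gs.sum := length_le_sum (fun x hx => hγ x (by simp [hx]))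
  have f1 : Rr (a :: g :: gs) 0 = Ll (a :: g :: gs) 0 + a := F1 a g gs ha hg hgs
  have f2 : Rr (a :: g :: gs) 1 = Ll (a :: g :: gs) 0 + 1 := F2 a g gs ha hg hgs
  have f3 : Ll (a :: g :: gs) 1 + g = Ll (a :: g :: gs) 0 + 1 := F3 a g gs ha hg hgs
  have f4 : Rr ((a + g) :: gs) 0 = Rr (a :: g :: gs) 0 + 1 := F4 a g gs ha hg hgs
  have f5 : Ll ((a + g) :: gs) 0 = Ll (a :: g :: gs) 1 := F5 a g gs ha hg hgs
  set L0 := Ll (a :: g :: gs) 0 with hL0def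
  set R0 := Rr (a :: g :: gs) 0 with hR0def
  set L1 := Ll (a :: g :: gs) 1 with hL1def
  rw [skewContent_cons a (g :: gs) _ v,
      skewContent_cons g gs (fun i j => splitMap L0 R0 L1 V (i + 1) j) v,
      skewContent_cons (a + g) gs V v]
  rw [← hL0def, ← hR0def, f4, f5]
  have hLl1 : Ll (g :: gs) 0 = L1 := (Ll_cons a (g :: gs) 0).symm
  have hRr1 : Rr (g :: gs) 0 = L0 + 1 := by rw [(Rr_cons a (g :: gs) 0).symm]; exact f2
  rw [hLl1, hRr1]
  beta_reduce
  simp only [Nat.zero_add]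
  -- third components agree
  have hthird : skewContent (ribbonOuter gs) (ribbonInner gs)
      (fun i j => splitMap L0 R0 L1 V (i + 1 + 1) j) v
      = skewContent (ribbonOuter gs) (ribbonInner gs) (fun i j => V (i + 1) j) v := rfl
  rw [hthird]
  -- row 1 of the split equals the left part of row 0 of V
  have hcard1 : ((Finset.Ico L1 (L0 + 1)).filter fun j => splitMap L0 R0 L1 V 1 j = v).card
      = ((Finset.Ico L1 (L0 + 1)).filter fun j => V 0 j = v).card := by
    congr 1
    apply Finset.filter_congr
    intro j hj
    rw [Finset.mem_Ico] at hj
    simp [splitMap, show L1 ≤ j ∧ j ≤ L0 from by omega]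
  -- row 0 of the split equals the right part of row 0 of V
  have hcard0 : ((Finset.Ico L0 R0).filter fun j => splitMap L0 R0 L1 V 0 j = v).card
      = ((Finset.Ico (L0 + 1) (R0 + 1)).filter fun j => V 0 j = v).card := by
    have s1 : ((Finset.Ico L0 R0).filter fun j => splitMap L0 R0 L1 V 0 j = v).card
        = ((Finset.Ico L0 R0).filter fun j => V 0 (j + 1) = v).card := by
      congr 1
      apply Finset.filter_congr
      intro j hj
      rw [Finset.mem_Ico] at hj
      simp [splitMap, show L0 ≤ j ∧ j < R0 from by omega]
    have s2 : ((Finset.Ico (L0 + 1) (R0 + 1)).filter fun j => V 0 (j - 1 + 1) = v).card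
        = ((Finset.Ico L0 R0).filter fun j => V 0 (j + 1) = v).card :=
      card_filter_Ico_shift (fun j => V 0 (j + 1)) L0 R0 v (by omega)
    have s3 : ((Finset.Ico (L0 + 1) (R0 + 1)).filter fun j => V 0 (j - 1 + 1) = v).card
        = ((Finset.Ico (L0 + 1) (R0 + 1)).filter fun j => V 0 j = v).card := by
      congr 1
      apply Finset.filter_congr
      intro j hj
      rw [Finset.mem_Ico] at hj
      rw [show j - 1 + 1 = j by omega]
    omega
  rw [hcard1, hcard0]
  -- combine the two intervals
  have hunion : ((Finset.Ico L1 (L0 + 1)).filter fun j => V 0 j = v).card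
      + ((Finset.Ico (L0 + 1) (R0 + 1)).filter fun j => V 0 j = v).card
      = ((Finset.Ico L1 (R0 + 1)).filter fun j => V 0 j = v).card := by
    rw [← Finset.card_union_of_disjoint
      (Finset.disjoint_filter_filter (Finset.Ico_disjoint_Ico_consecutive L1 (L0 + 1) (R0 + 1)))]
    rw [← Finset.filter_union, Finset.Ico_union_Ico_eq_Ico (by omega) (by omega)]
  omega

lemma merge_content (a g : ℕ) (gs : List ℕ) (ha : 0 < a) (hγ : IsCompositionList (g :: gs))
    (U : ℕ → ℕ → ℕ) (v : ℕ) :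
    skewContent (ribbonOuter ((a + g) :: gs)) (ribbonInner ((a + g) :: gs))
        (mergeMap (Ll (a :: g :: gs) 0) U) v
      = skewContent (ribbonOuter (a :: g :: gs)) (ribbonInner (a :: g :: gs)) U v := by
  have hg : 0 < g := hγ g (by simp)
  have hgs : gs.length ≤ gs.sum := length_le_sum (fun x hx => hγ x (by simp [hx]))
  have f1 : Rr (a :: g :: gs) 0 = Ll (a :: g :: gs) 0 + a := F1 a g gs ha hg hgs
  have f2 : Rr (a :: g :: gs) 1 = Ll (a :: g :: gs) 0 + 1 := F2 a g gs ha hg hgs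
  have f3 : Ll (a :: g :: gs) 1 + g = Ll (a :: g :: gs) 0 + 1 := F3 a g gs ha hg hgs
  have f4 : Rr ((a + g) :: gs) 0 = Rr (a :: g :: gs) 0 + 1 := F4 a g gs ha hg hgs
  have f5 : Ll ((a + g) :: gs) 0 = Ll (a :: g :: gs) 1 := F5 a g gs ha hg hgs
  set L0 := Ll (a :: g :: gs) 0 with hL0def
  set R0 := Rr (a :: g :: gs) 0 with hR0def
  set L1 := Ll (a :: g :: gs) 1 with hL1def
  rw [skewContent_cons (a + g) gs _ v,
      skewContent_cons a (g :: gs) U v,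
      skewContent_cons g gs (fun i j => U (i + 1) j) v]
  rw [← hL0def, ← hR0def, f4, f5]
  have hLl1 : Ll (g :: gs) 0 = L1 := (Ll_cons a (g :: gs) 0).symm
  have hRr1 : Rr (g :: gs) 0 = L0 + 1 := by rw [(Rr_cons a (g :: gs) 0).symm]; exact f2
  rw [hLl1, hRr1]
  beta_reduce
  simp only [Nat.zero_add]
  have hthird : skewContent (ribbonOuter gs) (ribbonInner gs)
      (fun i j => mergeMap L0 U (i + 1) j) v
      = skewContent (ribbonOuter gs) (ribbonInner gs)
        (fun i j => U (i + 1 + 1) j) v := rfl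
  rw [hthird]
  have hcard1 : ((Finset.Ico L1 (L0 + 1)).filter fun j => mergeMap L0 U 0 j = v).card
      = ((Finset.Ico L1 (L0 + 1)).filter fun j => U 1 j = v).card := by
    congr 1
    apply Finset.filter_congr
    intro j hj
    rw [Finset.mem_Ico] at hj
    simp [mergeMap, show j ≤ L0 from by omega]
  have hcard0 : ((Finset.Ico (L0 + 1) (R0 + 1)).filter fun j => mergeMap L0 U 0 j = v).card
      = ((Finset.Ico L0 R0).filter fun j => U 0 j = v).card := by
    have s1 : ((Finset.Ico (L0 + 1) (R0 + 1)).filter fun j => mergeMap L0 U 0 j = v).card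
        = ((Finset.Ico (L0 + 1) (R0 + 1)).filter fun j => U 0 (j - 1) = v).card := by
      congr 1
      apply Finset.filter_congr
      intro j hj
      rw [Finset.mem_Ico] at hj
      simp [mergeMap, show ¬ (j ≤ L0) from by omega]
    rw [s1]
    exact card_filter_Ico_shift (fun j => U 0 j) L0 R0 v (by omega)
  have hunion : ((Finset.Ico L1 (L0 + 1)).filter fun j => mergeMap L0 U 0 j = v).card
      + ((Finset.Ico (L0 + 1) (R0 + 1)).filter fun j => mergeMap L0 U 0 j = v).card
      = ((Finset.Ico L1 (R0 + 1)).filter fun j => mergeMap L0 U 0 j = v).card := by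
    rw [← Finset.card_union_of_disjoint
      (Finset.disjoint_filter_filter (Finset.Ico_disjoint_Ico_consecutive L1 (L0 + 1) (R0 + 1)))]
    rw [← Finset.filter_union, Finset.Ico_union_Ico_eq_Ico (by omega) (by omega)]
  omega

end RSH
namespace RSH

lemma DSet_split (a g : ℕ) (gs : List ℕ) (ha : 0 < a) (hγ : IsCompositionList (g :: gs))
    (m : ℕ →₀ ℕ) :
    (DSet (a :: g :: gs) m).ncard
      = (SSet (ribbonOuter (a :: g :: gs)) (ribbonInner (a :: g :: gs)) m).ncard
        + (SSet (ribbonOuter ((a + g) :: gs)) (ribbonInner ((a + g) :: gs)) m).ncard := by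
  classical
  have hg : 0 < g := hγ g (by simp)
  have hgs : gs.length ≤ gs.sum := length_le_sum (fun x hx => hγ x (by simp [hx]))
  have hδc : IsCompositionList (a :: g :: gs) := by
    intro x hx
    rcases List.mem_cons.mp hx with rfl | hx
    · exact ha
    · exact hγ x hx
  have f1 : Rr (a :: g :: gs) 0 = Ll (a :: g :: gs) 0 + a := F1 a g gs ha hg hgs
  have f2 : Rr (a :: g :: gs) 1 = Ll (a :: g :: gs) 0 + 1 := F2 a g gs ha hg hgs
  have f3 : Ll (a :: g :: gs) 1 + g = Ll (a :: g :: gs) 0 + 1 := F3 a g gs ha hg hgs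
  have f4 : Rr ((a + g) :: gs) 0 = Rr (a :: g :: gs) 0 + 1 := F4 a g gs ha hg hgs
  have f5 : Ll ((a + g) :: gs) 0 = Ll (a :: g :: gs) 1 := F5 a g gs ha hg hgs
  have cδ0 : ∀ j, SkewCell (ribbonOuter (a :: g :: gs)) (ribbonInner (a :: g :: gs)) 0 j ↔
      (Ll (a :: g :: gs) 0 ≤ j ∧ j < Rr (a :: g :: gs) 0) := by
    intro j; rw [cell_iff]; simp only [List.length_cons]; omega
  have cδ1 : ∀ j, SkewCell (ribbonOuter (a :: g :: gs)) (ribbonInner (a :: g :: gs)) 1 j ↔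
      (Ll (a :: g :: gs) 1 ≤ j ∧ j < Ll (a :: g :: gs) 0 + 1) := by
    intro j; rw [cell_iff, f2]; simp only [List.length_cons]; omega
  have cδk : ∀ k j, SkewCell (ribbonOuter (a :: g :: gs)) (ribbonInner (a :: g :: gs)) (k + 2) j ↔
      SkewCell (ribbonOuter ((a + g) :: gs)) (ribbonInner ((a + g) :: gs)) (k + 1) j := by
    intro k j
    rw [cell_iff, cell_iff, ← F6R a g gs k, ← F6L a g gs k]
    simp only [List.length_cons]
    omega
  have cε0 : ∀ j, SkewCell (ribbonOuter ((a + g) :: gs)) (ribbonInner ((a + g) :: gs)) 0 j ↔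
      (Ll (a :: g :: gs) 1 ≤ j ∧ j < Rr (a :: g :: gs) 0 + 1) := by
    intro j; rw [cell_iff, f4, f5]; simp only [List.length_cons]; omega
  set L0 : ℕ := Ll (a :: g :: gs) 0 with hL0
  set R0 : ℕ := Rr (a :: g :: gs) 0 with hR0
  set L1 : ℕ := Ll (a :: g :: gs) 1 with hL1
  set S1 : Set (ℕ → ℕ → ℕ) :=
    SSet (ribbonOuter (a :: g :: gs)) (ribbonInner (a :: g :: gs)) m with hS1
  set S2 : Set (ℕ → ℕ → ℕ) :=
    SSet (ribbonOuter ((a + g) :: gs)) (ribbonInner ((a + g) :: gs)) m with hS2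
  have hS1D : S1 ⊆ DSet (a :: g :: gs) m := by
    rintro U ⟨⟨hker, hrow, hcol⟩, hcont⟩
    exact ⟨hker, hrow, fun i j h1 h2 => hcol (i + 1) j h1 h2, hcont⟩
  -- split maps S2 into D
  have hΦmem : ∀ V ∈ S2, splitMap L0 R0 L1 V ∈ DSet (a :: g :: gs) m := by
    rintro V ⟨⟨hker, hrow, hcol⟩, hcont⟩
    refine ⟨?_, ?_, ?_, ?_⟩
    · intro i j hnc
      match i with
      | 0 =>
        rw [cδ0] at hnc
        rw [splitMap_zero, if_neg hnc]
      | 1 =>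
        rw [cδ1] at hnc
        rw [splitMap_one, if_neg (by omega : ¬ (L1 ≤ j ∧ j ≤ L0))]
      | (k + 2) =>
        rw [cδk] at hnc
        rw [splitMap_ge2]
        exact hker (k + 1) j hnc
    · intro i j hc1 hc2
      match i with
      | 0 =>
        rw [cδ0] at hc1 hc2
        rw [splitMap_zero, splitMap_zero, if_pos hc1, if_pos hc2]
        exact hrow 0 (j + 1) (by rw [cε0]; omega) (by rw [cε0]; omega)
      | 1 =>
        rw [cδ1] at hc1 hc2
        rw [splitMap_one, splitMap_one, if_pos (by omega : L1 ≤ j ∧ j ≤ L0),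
          if_pos (by omega : L1 ≤ j + 1 ∧ j + 1 ≤ L0)]
        exact hrow 0 j (by rw [cε0]; omega) (by rw [cε0]; omega)
      | (k + 2) =>
        rw [splitMap_ge2, splitMap_ge2]
        exact hrow (k + 1) j ((cδk k j).mp hc1) ((cδk k (j + 1)).mp hc2)
    · intro i j hc1 hc2
      match i with
      | 0 =>
        simp only [Nat.zero_add] at hc1 hc2 ⊢
        rw [cδ1] at hc1
        have hc2' := (cδk 0 j).mp hc2
        rw [splitMap_one, if_pos (by omega : L1 ≤ j ∧ j ≤ L0), splitMap_ge2]
        exact hcol 0 j (by rw [cε0]; omega) hc2'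
      | (k + 1) =>
        rw [show k + 1 + 1 = k + 2 by omega] at hc1 ⊢
        rw [show k + 1 + 2 = (k + 1) + 2 by omega] at hc2 ⊢
        rw [splitMap_ge2, splitMap_ge2]
        exact hcol (k + 1) j ((cδk k j).mp hc1) ((cδk (k + 1) j).mp hc2)
    · intro v
      rw [split_content a g gs ha hγ V v]
      exact hcont v
  -- split fillings are not strict at the top corner
  have hΦnotstrict : ∀ V ∈ S2, ¬ (splitMap L0 R0 L1 V 0 L0 < splitMap L0 R0 L1 V 1 L0) := by
    rintro V ⟨⟨hker, hrow, hcol⟩, hcont⟩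
    rw [splitMap_zero, splitMap_one, if_pos (by omega : L0 ≤ L0 ∧ L0 < R0),
      if_pos (by omega : L1 ≤ L0 ∧ L0 ≤ L0)]
    have := hrow 0 L0 (by rw [cε0]; omega) (by rw [cε0]; omega)
    omega
  have hS1strict : ∀ U ∈ S1, U 0 L0 < U 1 L0 := by
    rintro U ⟨⟨hker, hrow, hcol⟩, hcont⟩
    exact hcol 0 L0 (by rw [cδ0]; omega) (by rw [cδ1]; omega)
  -- merge is a left inverse of split on S2
  have hMΦ : ∀ V ∈ S2, mergeMap L0 (splitMap L0 R0 L1 V) = V := by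
    rintro V ⟨⟨hker, hrow, hcol⟩, hcont⟩
    funext i j
    match i with
    | 0 =>
      rw [mergeMap_zero]
      by_cases hj : j ≤ L0
      · rw [if_pos hj, splitMap_one]
        by_cases hj2 : L1 ≤ j
        · rw [if_pos (by omega : L1 ≤ j ∧ j ≤ L0)]
        · rw [if_neg (by omega : ¬ (L1 ≤ j ∧ j ≤ L0))]
          exact (hker 0 j (by rw [cε0]; omega)).symm
      · rw [if_neg hj, splitMap_zero]
        by_cases hj2 : j - 1 < R0
        · rw [if_pos (by omega : L0 ≤ j - 1 ∧ j - 1 < R0)]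
          congr 1
          omega
        · rw [if_neg (by omega : ¬ (L0 ≤ j - 1 ∧ j - 1 < R0))]
          exact (hker 0 j (by rw [cε0]; omega)).symm
    | (k + 1) =>
      rw [mergeMap_succ, splitMap_ge2]
  -- the merge of a non-strict element of D lies in S2
  have hMmem : ∀ U ∈ DSet (a :: g :: gs) m, ¬ (U 0 L0 < U 1 L0) → mergeMap L0 U ∈ S2 := by
    rintro U ⟨hker, hrow, hcol, hcont⟩ hns
    refine ⟨⟨?_, ?_, ?_⟩, ?_⟩
    · intro i j hnc
      match i with
      | 0 =>
        rw [cε0] at hnc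
        rw [mergeMap_zero]
        by_cases hj : j ≤ L0
        · rw [if_pos hj]
          exact hker 1 j (by rw [cδ1]; omega)
        · rw [if_neg hj]
          exact hker 0 (j - 1) (by rw [cδ0]; omega)
      | (k + 1) =>
        rw [mergeMap_succ]
        exact hker (k + 2) j (by rw [cδk]; exact hnc)
    · intro i j hc1 hc2
      match i with
      | 0 =>
        rw [cε0] at hc1 hc2
        rw [mergeMap_zero, mergeMap_zero]
        by_cases h1 : j + 1 ≤ L0
        · rw [if_pos (by omega : j ≤ L0), if_pos h1]
          exact hrow 1 j (by rw [cδ1]; omega) (by rw [cδ1]; omega)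
        · by_cases h2 : j ≤ L0
          · rw [if_pos h2, if_neg h1]
            have hj : j = L0 := by omega
            subst hj
            simpa using hns
          · rw [if_neg h2, if_neg h1]
            have := hrow 0 (j - 1) (by rw [cδ0]; omega) (by rw [cδ0]; omega)
            rw [show j - 1 + 1 = j by omega] at this
            rw [show j + 1 - 1 = j by omega]
            exact this
      | (k + 1) =>
        rw [mergeMap_succ, mergeMap_succ]
        exact hrow (k + 2) j ((cδk k j).mpr hc1) ((cδk k (j + 1)).mpr hc2)
    · intro i j hc1 hc2
      match i with
      | 0 =>
        simp only [Nat.zero_add] at hc1 hc2 ⊢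
        rw [cε0] at hc1
        have hc2' : SkewCell (ribbonOuter (a :: g :: gs)) (ribbonInner (a :: g :: gs)) 2 j :=
          (cδk 0 j).mpr hc2
        have hb := (cell_iff (a :: g :: gs) 2 j).mp hc2'
        have hRr2 : Rr (a :: g :: gs) 2 = L1 + 1 := Rr_succ hδc hb.1
        rw [mergeMap_zero, if_pos (by omega : j ≤ L0), show (1 : ℕ) = 0 + 1 from rfl,
          mergeMap_succ]
        exact hcol 0 j (by rw [cδ1]; omega) (by simpa using hc2')
      | (k + 1) =>
        rw [mergeMap_succ, mergeMap_succ]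
        have c1 : SkewCell (ribbonOuter (a :: g :: gs)) (ribbonInner (a :: g :: gs))
            (k + 1 + 1) j := by
          rw [show k + 1 + 1 = k + 2 by omega]; exact (cδk k j).mpr hc1
        have c2 : SkewCell (ribbonOuter (a :: g :: gs)) (ribbonInner (a :: g :: gs))
            (k + 1 + 2) j :=
          (cδk (k + 1) j).mpr (by rw [show k + 1 + 1 = k + 2 by omega]; exact hc2)
        have := hcol (k + 1) j c1 c2
        rwa [show k + 1 + 1 = k + 2 by omega] at this
    · intro v
      rw [merge_content a g gs ha hγ U v]
      exact hcont v
  -- split is a left inverse of merge on non-strict elements of D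
  have hΦM : ∀ U ∈ DSet (a :: g :: gs) m, ¬ (U 0 L0 < U 1 L0) →
      splitMap L0 R0 L1 (mergeMap L0 U) = U := by
    rintro U ⟨hker, hrow, hcol, hcont⟩ _hns
    funext i j
    match i with
    | 0 =>
      rw [splitMap_zero]
      by_cases hj : L0 ≤ j ∧ j < R0
      · rw [if_pos hj, mergeMap_zero, if_neg (by omega : ¬ (j + 1 ≤ L0))]
        simp
      · rw [if_neg hj]
        exact (hker 0 j (by rw [cδ0]; exact hj)).symm
    | 1 =>
      rw [splitMap_one]
      by_cases hj : L1 ≤ j ∧ j ≤ L0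
      · rw [if_pos hj, mergeMap_zero, if_pos hj.2]
      · rw [if_neg hj]
        exact (hker 1 j (by rw [cδ1]; omega)).symm
    | (k + 2) =>
      rw [splitMap_ge2, mergeMap_succ]
  -- D is covered
  have hDsub : DSet (a :: g :: gs) m ⊆ S1 ∪ (splitMap L0 R0 L1 '' S2) := by
    intro U hU
    by_cases hstrict : U 0 L0 < U 1 L0
    · left
      obtain ⟨hker, hrow, hcol, hcont⟩ := hU
      refine ⟨⟨hker, hrow, ?_⟩, hcont⟩
      intro i j hc1 hc2
      match i with
      | 0 =>
        simp only [Nat.zero_add] at hc1 hc2 ⊢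
        have hj : j = L0 := by
          rw [cδ1] at hc2
          rw [cδ0] at hc1
          omega
        subst hj
        exact hstrict
      | (k + 1) =>
        rw [show k + 1 + 1 = k + 2 by omega] at hc2 ⊢
        exact hcol k j hc1 hc2
    · right
      exact ⟨mergeMap L0 U, hMmem U hU hstrict, hΦM U hU hstrict⟩
  have hdisj : Disjoint S1 (splitMap L0 R0 L1 '' S2) := by
    rw [Set.disjoint_left]
    rintro U hU1 ⟨V, hV, rfl⟩
    exact hΦnotstrict V hV (hS1strict _ hU1)
  have hUnion : DSet (a :: g :: gs) m = S1 ∪ (splitMap L0 R0 L1 '' S2) := by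
    apply Set.Subset.antisymm hDsub
    rintro U (hU | ⟨V, hV, rfl⟩)
    · exact hS1D hU
    · exact hΦmem V hV
  have hDfin : (DSet (a :: g :: gs) m).Finite :=
    finite_fillings (ribbonOuter (a :: g :: gs)) (ribbonInner (a :: g :: gs)) m _
      (fun U hU => hU.1) (fun U hU => hU.2.2.2)
  have hS1fin : S1.Finite := hDfin.subset (hUnion ▸ Set.subset_union_left)
  have hIfin : (splitMap L0 R0 L1 '' S2).Finite :=
    hDfin.subset (hUnion ▸ Set.subset_union_right)
  have hinj : Set.InjOn (splitMap L0 R0 L1) S2 := by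
    intro V1 h1 V2 h2 he
    have := congrArg (mergeMap L0) he
    rwa [hMΦ V1 h1, hMΦ V2 h2] at this
  rw [hUnion, Set.ncard_union_eq hdisj hS1fin hIfin, Set.ncard_image_of_injOn hinj]

end RSH
namespace RSH

lemma hN_apply (a : ℕ) (m : ℕ →₀ ℕ) :
    hN a m = if (∑ v ∈ m.support, m v) = a then (1 : ℤ) else 0 := rfl

lemma DSet_count (a : ℕ) (γ : List ℕ) (ha : 0 < a) (hγc : IsCompositionList γ)
    (hne : γ ≠ []) (m : ℕ →₀ ℕ) :
    ((DSet (a :: γ) m).ncard : ℤ)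
      = ∑ p ∈ Finset.HasAntidiagonal.antidiagonal m,
          hN a p.1 * skewSchur (ribbonOuter γ) (ribbonInner γ) p.2 := by
  classical
  have hδc : IsCompositionList (a :: γ) := by
    intro x hx
    rcases List.mem_cons.mp hx with rfl | hx
    · exact ha
    · exact hγc x hx
  have hlen : 0 < (a :: γ).length := by simp
  have hLR : Ll (a :: γ) 0 + a = Rr (a :: γ) 0 := by
    have := Ll_add_getD hδc hlen
    simpa using this
  have cδ0 : ∀ j, SkewCell (ribbonOuter (a :: γ)) (ribbonInner (a :: γ)) 0 j ↔
      (Ll (a :: γ) 0 ≤ j ∧ j < Ll (a :: γ) 0 + a) := by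
    intro j; rw [cell_iff, ← hLR]; simp only [List.length_cons]; omega
  set L : ℕ := Ll (a :: γ) 0 with hL
  -- the fiber of D over a fixed row-0 content
  set Dp : ((ℕ →₀ ℕ) × (ℕ →₀ ℕ)) → Set (ℕ → ℕ → ℕ) := fun p =>
    {U | U ∈ DSet (a :: γ) m ∧
      ∀ v, ((Finset.Ico L (L + a)).filter fun j => U 0 j = v).card = p.1 v} with hDp
  -- total content splits
  have hsum : ∀ U ∈ DSet (a :: γ) m, ∀ v,
      ((Finset.Ico L (L + a)).filter fun j => U 0 j = v).card
        + skewContent (ribbonOuter γ) (ribbonInner γ) (fun i j => U (i + 1) j) v = m v := by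
    intro U hU v
    have := skewContent_cons a γ U v
    rw [← hLR] at this
    rw [← this]
    exact hU.2.2.2 v
  -- cover
  have hcover : DSet (a :: γ) m = ⋃ p ∈ Finset.HasAntidiagonal.antidiagonal m, Dp p := by
    apply Set.Subset.antisymm
    · intro U hU
      have h1 : ∀ v, ((Finset.Ico L (L + a)).filter fun j => U 0 j = v).card ≠ 0 →
          v ∈ m.support := by
        intro v hv
        rw [Finsupp.mem_support_iff]
        have := hsum U hU v
        omega
      have h2 : ∀ v, skewContent (ribbonOuter γ) (ribbonInner γ) (fun i j => U (i + 1) j) v ≠ 0 →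
          v ∈ m.support := by
        intro v hv
        rw [Finsupp.mem_support_iff]
        have := hsum U hU v
        omega
      set m1 : ℕ →₀ ℕ := Finsupp.onFinset m.support
        (fun v => ((Finset.Ico L (L + a)).filter fun j => U 0 j = v).card) h1 with hm1
      set m2 : ℕ →₀ ℕ := Finsupp.onFinset m.support
        (fun v => skewContent (ribbonOuter γ) (ribbonInner γ) (fun i j => U (i + 1) j) v) h2
        with hm2
      have hmem : (m1, m2) ∈ Finset.HasAntidiagonal.antidiagonal m := by
        rw [Finset.HasAntidiagonal.mem_antidiagonal]
        ext v
        rw [Finsupp.add_apply, hm1, hm2, Finsupp.onFinset_apply, Finsupp.onFinset_apply]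
        exact hsum U hU v
      exact Set.mem_biUnion hmem ⟨hU, fun v => by rw [hm1, Finsupp.onFinset_apply]⟩
    · intro U hU
      rw [Set.mem_iUnion₂] at hU
      obtain ⟨p, _, hU⟩ := hU
      exact hU.1
  -- disjointness
  have hdisjp : ∀ p ∈ Finset.HasAntidiagonal.antidiagonal m, ∀ q ∈ Finset.HasAntidiagonal.antidiagonal m, p ≠ q →
      Disjoint (Dp p) (Dp q) := by
    intro p hp q hq hpq
    rw [Set.disjoint_left]
    rintro U ⟨hU, hUp⟩ ⟨_, hUq⟩
    apply hpq
    have h1 : p.1 = q.1 := by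
      ext v
      rw [← hUp v, ← hUq v]
    have h2 : p.2 = q.2 := by
      rw [Finset.HasAntidiagonal.mem_antidiagonal] at hp hq
      ext v
      have e1 := DFunLike.congr_fun hp v
      have e2 := DFunLike.congr_fun hq v
      rw [Finsupp.add_apply] at e1 e2
      have e3 := DFunLike.congr_fun h1 v
      omega
    exact Prod.ext h1 h2
  -- finiteness
  have hDfin : (DSet (a :: γ) m).Finite :=
    finite_fillings (ribbonOuter (a :: γ)) (ribbonInner (a :: γ)) m _
      (fun U hU => hU.1) (fun U hU => hU.2.2.2)
  have hDpfin : ∀ p ∈ Finset.HasAntidiagonal.antidiagonal m, (Dp p).Finite :=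
    fun p _ => hDfin.subset (fun U hU => hU.1)
  -- counting
  rw [hcover, ncard_biUnion _ _ hDpfin hdisjp, Nat.cast_sum]
  apply Finset.sum_congr rfl
  intro p hp
  rw [Finset.HasAntidiagonal.mem_antidiagonal] at hp
  by_cases hdeg : (∑ v ∈ p.1.support, p.1 v) = a
  · -- the row content has the right degree
    rw [hN_apply, if_pos hdeg, one_mul, skewSchur_apply]
    norm_cast
    obtain ⟨t0, ⟨hoff, hstep, hcnt⟩, huniq⟩ := row_exists_unique L a p.1 hdeg
    have hdown : (fun (U : ℕ → ℕ → ℕ) => fun i j => U (i + 1) j) '' Dp p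
        = SSet (ribbonOuter γ) (ribbonInner γ) p.2 := by
      apply Set.Subset.antisymm
      · rintro T ⟨U, ⟨⟨hker, hrow, hcol, hcont⟩, hrc⟩, rfl⟩
        refine ⟨⟨?_, ?_, ?_⟩, ?_⟩
        · intro i j hnc
          exact hker (i + 1) j (fun hc => hnc ((cell_cons_iff a γ i j).mp hc))
        · intro i j hc1 hc2
          exact hrow (i + 1) j ((cell_cons_iff a γ i j).mpr hc1)
            ((cell_cons_iff a γ i (j + 1)).mpr hc2)
        · intro i j hc1 hc2
          exact hcol i j ((cell_cons_iff a γ i j).mpr hc1)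
            ((cell_cons_iff a γ (i + 1) j).mpr hc2)
        · intro v
          show skewContent (ribbonOuter γ) (ribbonInner γ) (fun i j => U (i + 1) j) v = p.2 v
          have e1 := hsum U ⟨hker, hrow, hcol, hcont⟩ v
          have e2 := hrc v
          have e3 := DFunLike.congr_fun hp v
          rw [Finsupp.add_apply] at e3
          omega
      · rintro T ⟨⟨hker, hrow, hcol⟩, hcont⟩
        refine ⟨liftRow t0 T, ⟨⟨?_, ?_, ?_, ?_⟩, ?_⟩, ?_⟩
        · intro i j hnc
          cases i with
          | zero =>
            rw [cδ0] at hnc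
            rw [liftRow_zero]
            exact hoff j (by omega)
          | succ k =>
            rw [liftRow_succ]
            exact hker k j (fun hc => hnc ((cell_cons_iff a γ k j).mpr hc))
        · intro i j hc1 hc2
          cases i with
          | zero =>
            rw [cδ0] at hc1 hc2
            rw [liftRow_zero, liftRow_zero]
            exact hstep j (by omega) (by omega)
          | succ k =>
            rw [liftRow_succ, liftRow_succ]
            exact hrow k j ((cell_cons_iff a γ k j).mp hc1)
              ((cell_cons_iff a γ k (j + 1)).mp hc2)
        · intro i j hc1 hc2
          rw [liftRow_succ, show i + 2 = (i + 1) + 1 from rfl, liftRow_succ]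
          exact hcol i j ((cell_cons_iff a γ i j).mp hc1)
            ((cell_cons_iff a γ (i + 1) j).mp hc2)
        · intro v
          rw [skewContent_cons a γ _ v, ← hLR]
          have e1 : ((Finset.Ico L (L + a)).filter
              fun j => liftRow t0 T 0 j = v).card = p.1 v := hcnt v
          have e2 : skewContent (ribbonOuter γ) (ribbonInner γ)
              (fun i j => liftRow t0 T (i + 1) j) v
              = skewContent (ribbonOuter γ) (ribbonInner γ) T v := rfl
          rw [e1, e2, hcont v]
          have e3 := DFunLike.congr_fun hp v
          rw [Finsupp.add_apply] at e3
          exact e3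
        · intro v
          exact hcnt v
        · rfl
      -- injectivity of down on Dp p
    have hinj : Set.InjOn (fun (U : ℕ → ℕ → ℕ) => fun i j => U (i + 1) j) (Dp p) := by
      rintro U ⟨⟨hker, hrow, hcol, hcont⟩, hrc⟩ U' ⟨⟨hker', hrow', hcol', hcont'⟩, hrc'⟩ he
      have hrow0 : ∀ (W : ℕ → ℕ → ℕ),
          (∀ i j, ¬ SkewCell (ribbonOuter (a :: γ)) (ribbonInner (a :: γ)) i j → W i j = 0) →
          (∀ i j, SkewCell (ribbonOuter (a :: γ)) (ribbonInner (a :: γ)) i j →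
            SkewCell (ribbonOuter (a :: γ)) (ribbonInner (a :: γ)) i (j + 1) →
            W i j ≤ W i (j + 1)) →
          (∀ v, ((Finset.Ico L (L + a)).filter fun j => W 0 j = v).card = p.1 v) →
          W 0 = t0 := by
        intro W hkerW hrowW hrcW
        apply huniq
        refine ⟨?_, ?_, ?_⟩
        · intro j hj
          exact hkerW 0 j (by rw [cδ0]; omega)
        · intro j h1 h2
          exact hrowW 0 j (by rw [cδ0]; omega) (by rw [cδ0]; omega)
        · exact hrcW
      funext i j
      cases i with
      | zero =>
        rw [show U 0 = t0 from hrow0 U hker hrow hrc,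
          show U' 0 = t0 from hrow0 U' hker' hrow' hrc']
      | succ k =>
        exact congrFun (congrFun he k) j
    rw [← hdown, Set.ncard_image_of_injOn hinj]
  · -- wrong degree: empty fiber
    rw [hN_apply, if_neg hdeg, zero_mul]
    have hempty : Dp p = ∅ := by
      rw [Set.eq_empty_iff_forall_notMem]
      rintro U ⟨hU, hrc⟩
      exact hdeg (row_total hrc)
    rw [hempty]
    simp

end RSH
namespace RSH

lemma headI_cons_tail {α : Type} [Inhabited α] {l : List α} (h : l ≠ []) :
    l.headI :: l.tail = l := by
  cases l with
  | nil => exact absurd rfl h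
  | cons a t => rfl

lemma headI_add_tail_sum (l : List ℕ) : l.headI + l.tail.sum = l.sum := by
  cases l with
  | nil => simp
  | cons a t => simp

lemma blocks_ne_nil {n : ℕ} (hn : 0 < n) (c : Composition n) : c.blocks ≠ [] := by
  intro h
  have := c.blocks_sum
  rw [h] at this
  simp at this
  omega

/-- prepend a block of size 1. -/
def consOne {n : ℕ} (c : Composition n) : Composition (n + 1) :=
  ⟨1 :: c.blocks,
    fun {i} hi => by
      rcases List.mem_cons.mp hi with rfl | hi
      · omega
      · exact c.blocks_pos hi,
    by rw [List.sum_cons, c.blocks_sum, Nat.add_comm]⟩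

/-- increase the first block by 1. -/
def incFirst {n : ℕ} (c : Composition n) : Composition (n + 1) :=
  ⟨(c.blocks.headI + 1) :: c.blocks.tail,
    fun {i} hi => by
      rcases List.mem_cons.mp hi with rfl | hi
      · omega
      · exact c.blocks_pos (List.mem_of_mem_tail hi),
    by
      rw [List.sum_cons]
      have := headI_add_tail_sum c.blocks
      have := c.blocks_sum
      omega⟩

lemma consOne_length {n : ℕ} (c : Composition n) : (consOne c).length = c.length + 1 := by
  simp [consOne, Composition.length]

lemma incFirst_length {n : ℕ} (hn : 0 < n) (c : Composition n) :
    (incFirst c).length = c.length := by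
  have h := blocks_ne_nil hn c
  simp only [incFirst, Composition.length, List.length_cons]
  rw [← headI_cons_tail h]
  simp

lemma sum_comp_split {M : Type} [AddCommMonoid M] (n : ℕ) (hn : 0 < n)
    (f : Composition (n + 1) → M) :
    ∑ c : Composition (n + 1), f c
      = (∑ c : Composition n, f (consOne c)) + ∑ c : Composition n, f (incFirst c) := by
  classical
  have hbij : Function.Bijective
      (Sum.elim (consOne (n := n)) (incFirst (n := n))) := by
    constructor
    · rintro (c | c) (d | d) he <;> simp only [Sum.elim_inl, Sum.elim_inr] at he
      · congr 1
        have hb : (1 : ℕ) :: c.blocks = 1 :: d.blocks := congrArg Composition.blocks he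
        ext1
        exact List.tail_eq_of_cons_eq hb
      · exfalso
        have hb := congrArg Composition.blocks he
        simp only [consOne, incFirst] at hb
        have h1 : (1 : ℕ) = d.blocks.headI + 1 := List.head_eq_of_cons_eq hb
        have := d.blocks_pos (show d.blocks.headI ∈ d.blocks by
          rw [← headI_cons_tail (blocks_ne_nil hn d)]
          exact List.mem_cons_self)
        omega
      · exfalso
        have hb := congrArg Composition.blocks he
        simp only [consOne, incFirst] at hb
        have h1 : c.blocks.headI + 1 = 1 := List.head_eq_of_cons_eq hb
        have := c.blocks_pos (show c.blocks.headI ∈ c.blocks by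
          rw [← headI_cons_tail (blocks_ne_nil hn c)]
          exact List.mem_cons_self)
        omega
      · congr 1
        have hb := congrArg Composition.blocks he
        simp only [incFirst] at hb
        have h1 := List.head_eq_of_cons_eq hb
        have h2 := List.tail_eq_of_cons_eq hb
        ext1
        rw [← headI_cons_tail (blocks_ne_nil hn c), ← headI_cons_tail (blocks_ne_nil hn d)]
        rw [h2]
        congr 1
        omega
    · intro d
      have hne : d.blocks ≠ [] := blocks_ne_nil (by omega) d
      obtain ⟨b, bs, hb⟩ : ∃ b bs, d.blocks = b :: bs := by
        cases hd : d.blocks with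
        | nil => exact absurd hd hne
        | cons b bs => exact ⟨b, bs, rfl⟩
      have hbpos : 0 < b := d.blocks_pos (by rw [hb]; exact List.mem_cons_self)
      have hsum := d.blocks_sum
      rw [hb, List.sum_cons] at hsum
      match b, hbpos with
      | 1, _ =>
        refine ⟨Sum.inl ⟨bs, ?_, ?_⟩, ?_⟩
        · intro i hi
          exact d.blocks_pos (by rw [hb]; exact List.mem_cons_of_mem _ hi)
        · omega
        · simp only [Sum.elim_inl]
          ext1
          show (1 : ℕ) :: bs = d.blocks
          rw [hb]
      | (k + 2), _ =>
        refine ⟨Sum.inr ⟨(k + 1) :: bs, ?_, ?_⟩, ?_⟩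
        · intro i hi
          rcases List.mem_cons.mp hi with rfl | hi
          · omega
          · exact d.blocks_pos (by rw [hb]; exact List.mem_cons_of_mem _ hi)
        · rw [List.sum_cons]
          omega
        · simp only [Sum.elim_inr]
          ext1
          show (k + 1 + 1) :: bs = d.blocks
          rw [hb, show k + 1 + 1 = k + 2 by omega]
  have hsum := Fintype.sum_bijective _ hbij
    (fun x => f (Sum.elim consOne incFirst x)) f (fun x => rfl)
  rw [← hsum, Fintype.sum_sum_type]
  simp only [Sum.elim_inl, Sum.elim_inr]

lemma consOne_term {α : Type} (a : α) (rest : List α) (c : Composition rest.length)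
    [AddCommMonoid α] :
    (((a :: rest).splitWrtComposition (consOne c)).map List.sum)
      = List.sum [a] :: ((rest.splitWrtComposition c).map List.sum) := by
  show ((a :: rest).splitWrtCompositionAux (consOne c).blocks).map List.sum = _
  rw [show (consOne c).blocks = 1 :: c.blocks from rfl, List.splitWrtCompositionAux_cons]
  simp only [List.take_succ_cons, List.take_zero, List.drop_succ_cons, List.drop_zero,
    List.map_cons]
  rfl

lemma incFirst_term (a g : ℕ) (gs : List ℕ) (c : Composition (g :: gs).length) :
    (((a :: g :: gs).splitWrtComposition (incFirst c)).map List.sum)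
      = ((((a + g) :: gs).splitWrtComposition c).map List.sum) := by
  have hne : c.blocks ≠ [] := blocks_ne_nil (by simp) c
  have hpos : 0 < c.blocks.headI := c.blocks_pos (by
    rw [← headI_cons_tail hne]; exact List.mem_cons_self)
  obtain ⟨h', hh⟩ : ∃ h', c.blocks.headI = h' + 1 := ⟨c.blocks.headI - 1, by omega⟩
  show ((a :: g :: gs).splitWrtCompositionAux (incFirst c).blocks).map List.sum
    = (((a + g) :: gs).splitWrtCompositionAux c.blocks).map List.sum
  rw [show (incFirst c).blocks = (c.blocks.headI + 1) :: c.blocks.tail from rfl]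
  conv_rhs => rw [← headI_cons_tail hne]
  rw [hh, List.splitWrtCompositionAux_cons, List.splitWrtCompositionAux_cons]
  simp only [List.take_succ_cons, List.drop_succ_cons, List.map_cons, List.sum_cons]
  congr 1
  omega

end RSH

namespace RSH

lemma hN_mul (a g : ℕ) (gs : List ℕ) (ha : 0 < a) (hγ : IsCompositionList (g :: gs)) :
    hN a * ribbonSchur (g :: gs)
      = ribbonSchur (a :: g :: gs) + ribbonSchur ((a + g) :: gs) := by
  funext m
  have h1 : (hN a * ribbonSchur (g :: gs)) m
      = ∑ p ∈ Finset.HasAntidiagonal.antidiagonal m,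
          hN a p.1 * skewSchur (ribbonOuter (g :: gs)) (ribbonInner (g :: gs)) p.2 :=
    MvPowerSeries.coeff_mul m _ _
  have h2 : (ribbonSchur (a :: g :: gs) + ribbonSchur ((a + g) :: gs)) m
      = ((SSet (ribbonOuter (a :: g :: gs)) (ribbonInner (a :: g :: gs)) m).ncard : ℤ)
        + ((SSet (ribbonOuter ((a + g) :: gs)) (ribbonInner ((a + g) :: gs)) m).ncard : ℤ) :=
    rfl
  rw [h1, h2, ← DSet_count a (g :: gs) ha hγ (by simp) m, DSet_split a g gs ha hγ m]
  push_cast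
  ring

lemma ribbonSchur_single (x : ℕ) (hx : 0 < x) : ribbonSchur [x] = hN x := by
  classical
  funext m
  have hRr : Rr [x] 0 = x := by simp [Rr]
  have hLl : Ll [x] 0 = 0 := by simp [Ll, Rr]
  have c0 : ∀ j, SkewCell (ribbonOuter [x]) (ribbonInner [x]) 0 j ↔ (0 ≤ j ∧ j < 0 + x) := by
    intro j
    rw [cell_iff, hRr, hLl]
    simp only [List.length_singleton]
    omega
  have cno : ∀ k j, ¬ SkewCell (ribbonOuter [x]) (ribbonInner [x]) (k + 1) j := by
    intro k j hc
    have h := ((cell_iff [x] (k + 1) j).mp hc).1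
    simp at h
  have hcont : ∀ (U : ℕ → ℕ → ℕ) v, skewContent (ribbonOuter [x]) (ribbonInner [x]) U v
      = ((Finset.Ico 0 (0 + x)).filter fun j => U 0 j = v).card := by
    intro U v
    unfold skewContent
    rw [show (ribbonOuter [x]).length = 1 by simp [ribbonOuter], Finset.sum_range_one,
      getD_ribbonOuter _ (by simp), getD_ribbonInner _ (by simp), hRr, hLl]
    norm_num
  show ((SSet (ribbonOuter [x]) (ribbonInner [x]) m).ncard : ℤ) = hN x m
  rw [hN_apply]
  by_cases hdeg : (∑ v ∈ m.support, m v) = x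
  · rw [if_pos hdeg]
    obtain ⟨t0, ⟨hoff, hstep, hcnt⟩, huniq⟩ := row_exists_unique 0 x m hdeg
    norm_cast
    rw [Set.ncard_eq_one]
    refine ⟨liftRow t0 (fun _ _ => 0), ?_⟩
    ext U
    simp only [Set.mem_singleton_iff]
    constructor
    · rintro ⟨⟨hker, hrow, hcol⟩, hc⟩
      have hU0 : U 0 = t0 := huniq (U 0)
        ⟨fun j hj => hker 0 j (by rw [c0]; omega),
         fun j h1 h2 => hrow 0 j (by rw [c0]; omega) (by rw [c0]; omega),
         fun v => by rw [← hc v, hcont U v]⟩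
      funext i j
      cases i with
      | zero => rw [liftRow_zero, hU0]
      | succ k =>
        rw [liftRow_succ]
        exact hker (k + 1) j (cno k j)
    · rintro rfl
      refine ⟨⟨?_, ?_, ?_⟩, ?_⟩
      · intro i j hnc
        cases i with
        | zero =>
          rw [c0] at hnc
          rw [liftRow_zero]
          exact hoff j (by omega)
        | succ k => rw [liftRow_succ]
      · intro i j hc1 hc2
        cases i with
        | zero =>
          rw [c0] at hc1 hc2
          rw [liftRow_zero, liftRow_zero]
          exact hstep j (by omega) (by omega)
        | succ k => exact absurd hc1 (cno k j)
      · intro i j hc1 hc2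
        exact absurd hc2 (cno i j)
      · intro v
        rw [hcont]
        exact hcnt v
  · rw [if_neg hdeg]
    have hempty : SSet (ribbonOuter [x]) (ribbonInner [x]) m = ∅ := by
      rw [Set.eq_empty_iff_forall_notMem]
      rintro U ⟨⟨hker, hrow, hcol⟩, hc⟩
      apply hdeg
      apply row_total (t := U 0) (L := 0) (a := x)
      intro v
      rw [← hcont U v]
      exact hc v
    rw [hempty]
    simp

lemma main_aux : ∀ (n : ℕ) (α : List ℕ), α.length = n → α ≠ [] → IsCompositionList α →
    ribbonSchur α = ((-1 : ℤ) ^ α.length) •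
      ∑ c : Composition α.length,
        ((-1 : ℤ) ^ c.length) • hProd ((α.splitWrtComposition c).map List.sum) := by
  intro n
  induction n using Nat.strong_induction_on with
  | _ n ih =>
    intro α hlen hne hα
    match α with
    | [] => exact absurd rfl hne
    | [x] =>
      have hx : 0 < x := hα x (by simp)
      have huniv : (Finset.univ : Finset (Composition 1)) = {Composition.ones 1} := by
        apply Finset.eq_singleton_iff_unique_mem.mpr
        refine ⟨Finset.mem_univ _, ?_⟩
        intro c _
        have hb : c.blocks = [1] := by
          have hs := c.blocks_sum
          cases hcb : c.blocks with
          | nil => rw [hcb] at hs; simp at hs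
          | cons b bs =>
            rw [hcb] at hs
            simp only [List.sum_cons] at hs
            have hbp : 0 < b := c.blocks_pos (by rw [hcb]; exact List.mem_cons_self)
            have hbs : bs = [] := by
              cases hbs : bs with
              | nil => rfl
              | cons b2 bs2 =>
                have : 0 < b2 := c.blocks_pos
                  (by rw [hcb, hbs]; exact List.mem_cons_of_mem _ (List.mem_cons_self))
                rw [hbs] at hs
                simp only [List.sum_cons] at hs
                omega
            rw [hbs] at hs ⊢
            simp at hs
            rw [hs]
        ext1
        rw [hb]
        rfl
      rw [show ([x] : List ℕ).length = 1 from rfl, huniv, Finset.sum_singleton]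
      have hsplit : (([x] : List ℕ).splitWrtComposition (Composition.ones 1)) = [[x]] := rfl
      have hlen1 : (Composition.ones 1).length = 1 := by simp
      rw [hsplit, hlen1]
      simp only [List.map_cons, List.map_nil, List.sum_cons, List.sum_nil]
      rw [ribbonSchur_single x hx]
      have : hProd [x + 0] = hN x := by
        simp [hProd, hN]
      rw [this, smul_smul]
      norm_num
    | (a :: g :: gs) =>
      have ha : 0 < a := hα a (by simp)
      have hγ : IsCompositionList (g :: gs) := fun y hy => hα y (List.mem_cons_of_mem a hy)
      have hεc : IsCompositionList ((a + g) :: gs) := by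
        intro y hy
        rcases List.mem_cons.mp hy with rfl | hy
        · have := hγ g (by simp); omega
        · exact hγ y (List.mem_cons_of_mem _ hy)
      have hn2 : n = gs.length + 2 := by rw [← hlen]; simp
      have ih1 := ih (gs.length + 1) (by omega) (g :: gs) (by simp) (by simp) hγ
      have ih2 := ih (gs.length + 1) (by omega) ((a + g) :: gs) (by simp) (by simp) hεc
      have hmul := hN_mul a g gs ha hγ
      rw [show ((a : ℕ) :: g :: gs).length = (gs.length + 1) + 1 by simp]
      rw [sum_comp_split (gs.length + 1) (by omega)]
      have e1 : ∀ c : Composition (gs.length + 1),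
          ((-1 : ℤ) ^ (consOne c).length) •
              hProd (((a :: g :: gs).splitWrtComposition (consOne c)).map List.sum)
            = ((-1 : ℤ) ^ (c.length + 1)) •
              (hN a * hProd (((g :: gs).splitWrtComposition c).map List.sum)) := by
        intro c
        rw [consOne_length, consOne_term]
        congr 1
      have e2 : ∀ c : Composition (gs.length + 1),
          ((-1 : ℤ) ^ (incFirst c).length) •
              hProd (((a :: g :: gs).splitWrtComposition (incFirst c)).map List.sum)
            = ((-1 : ℤ) ^ c.length) •
              hProd ((((a + g) :: gs).splitWrtComposition c).map List.sum) := by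
        intro c
        have hc : Composition (g :: gs).length = Composition (gs.length + 1) := by simp
        rw [incFirst_length (by omega) c]
        congr 1
        have := incFirst_term a g gs (hc ▸ c)
        convert congrArg hProd this using 2
      rw [Finset.sum_congr rfl (fun c _ => e1 c), Finset.sum_congr rfl (fun c _ => e2 c)]
      rw [ih1, ih2] at hmul
      rw [show ((g : ℕ) :: gs).length = gs.length + 1 by simp] at hmul
      rw [show (((a + g) : ℕ) :: gs).length = gs.length + 1 by simp] at hmul
      rw [smul_add]
      have lhs1 : (-1 : ℤ) ^ (gs.length + 1 + 1) • ∑ c : Composition (gs.length + 1),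
            ((-1 : ℤ) ^ (c.length + 1)) •
              (hN a * hProd (((g :: gs).splitWrtComposition c).map List.sum))
          = hN a * ((-1 : ℤ) ^ (gs.length + 1) • ∑ c : Composition (gs.length + 1),
              ((-1 : ℤ) ^ c.length) •
                hProd (((g :: gs).splitWrtComposition c).map List.sum)) := by
        rw [Finset.smul_sum, Finset.smul_sum, Finset.mul_sum]
        apply Finset.sum_congr rfl
        intro c _
        rw [mul_smul_comm, mul_smul_comm, smul_smul, smul_smul]
        congr 1
        ring
      have lhs2 : (-1 : ℤ) ^ (gs.length + 1 + 1) • ∑ c : Composition (gs.length + 1),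
            ((-1 : ℤ) ^ c.length) •
              hProd ((((a + g) :: gs).splitWrtComposition c).map List.sum)
          = - ((-1 : ℤ) ^ (gs.length + 1) • ∑ c : Composition (gs.length + 1),
              ((-1 : ℤ) ^ c.length) •
                hProd ((((a + g) :: gs).splitWrtComposition c).map List.sum)) := by
        rw [show ((-1 : ℤ) ^ (gs.length + 1 + 1)) = -((-1 : ℤ) ^ (gs.length + 1)) by ring,
          neg_smul]
      rw [lhs1, lhs2, hmul]
      abel

end RSH

/-- `r_α = (-1)^{ℓ(α)} ∑_{β coarsening of α} (-1)^{ℓ(β)} h_{λ(β)}`, the sum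
ranging over all `2^{ℓ(α)-1}` coarsenings of `α`, indexed by compositions of `ℓ(α)`
(`h` only depends on the multiset of parts, so sorting `β` is immaterial). -/
theorem ribbonSchur_h_expansion (α : List ℕ) (hne : α ≠ []) (hα : IsCompositionList α) :
    ribbonSchur α = ((-1 : ℤ) ^ α.length) •
      ∑ c : Composition α.length,
        ((-1 : ℤ) ^ c.length) • hProd ((α.splitWrtComposition c).map List.sum) :=
  RSH.main_aux α.length α rfl hne hα
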